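/- Let A be a 5×5 additive-multiplicative magic square of distinct positive integers whose magic product P has the form P = p^s·q^4 for distinct primes p and q and a positive integer s. Then p = 2 or p = 3. -/

import Mathlib

set_option linter.unusedVariables false
set_option maxHeartbeats 1000000

lemma disjoint_pow_sums {p : ℕ} (hp : 2 ≤ p) (E F : Finset ℕ) (hd : Disjoint E F)
    (hne : E.Nonempty) (h : ∑ e ∈ E, p ^ e = ∑ e ∈ F, p ^ e) : False := by
  have hU : (E ∪ F).Nonempty := hne.mono Finset.subset_union_left
  set M := (E ∪ F).max' hU with hM
  have hMmem := (E ∪ F).max'_mem hU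
  have hle : ∀ e ∈ E ∪ F, e ≤ M := fun e he => (E ∪ F).le_max' e he
  rcases Finset.mem_union.mp hMmem with hME | hMF
  · have hFlt : ∀ e ∈ F, e < M := by
      intro e he
      refine lt_of_le_of_ne (hle e (Finset.mem_union_right _ he)) ?_
      intro heq
      subst heq; exact Finset.disjoint_left.mp hd hME he
    have h1 : ∑ e ∈ F, p ^ e < p ^ M := Nat.geomSum_lt hp hFlt
    have h2 : p ^ M ≤ ∑ e ∈ E, p ^ e :=
      Finset.single_le_sum (fun e _ => Nat.zero_le _) hME
    omega
  · have hElt : ∀ e ∈ E, e < M := by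
      intro e he
      refine lt_of_le_of_ne (hle e (Finset.mem_union_left _ he)) ?_
      intro heq
      subst heq; exact Finset.disjoint_left.mp hd he hMF
    have h1 : ∑ e ∈ E, p ^ e < p ^ M := Nat.geomSum_lt hp hElt
    have h2 : p ^ M ≤ ∑ e ∈ F, p ^ e :=
      Finset.single_le_sum (fun e _ => Nat.zero_le _) hMF
    omega



/-- `A` is an `n × n` additive-multiplicative magic square of pairwise distinct
positive integers, with magic sum `S` and magic product `P`: every row, every
column, and both long diagonals have sum `S` and product `P`. -/
def IsAddMulMagicSquare (n : ℕ) (A : Fin n → Fin n → ℕ) (S P : ℕ) : Prop :=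
  (∀ i j, 0 < A i j) ∧
  (Function.Injective fun c : Fin n × Fin n => A c.1 c.2) ∧
  (∀ i, ∑ j, A i j = S) ∧
  (∀ j, ∑ i, A i j = S) ∧
  (∑ i, A i i = S) ∧
  (∑ i, A i i.rev = S) ∧
  (∀ i, ∏ j, A i j = P) ∧
  (∀ j, ∏ i, A i j = P) ∧
  (∏ i, A i i = P) ∧
  (∏ i, A i i.rev = P)

/-- If a 5×5 additive-multiplicative magic square of distinct positive integers
has magic product `P = p^s * q^4` with `p ≠ q` primes and `s ≥ 1`, then
`p = 2` or `p = 3`. -/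
theorem five_square_product_p_pow_q_four_forces_two_or_three
    (A : Fin 5 → Fin 5 → ℕ) (S P : ℕ)
    (hA : IsAddMulMagicSquare 5 A S P)
    (p q s : ℕ) (hp : p.Prime) (hq : q.Prime) (hpq : p ≠ q) (hs : 1 ≤ s)
    (hP : P = p ^ s * q ^ 4) :
    p = 2 ∨ p = 3 := by
  obtain ⟨hpos, hinj, hrowS, hcolS, hd1S, hd2S, hrowP, hcolP, hd1P, hd2P⟩ := hA
  have hp2 : 2 ≤ p := hp.two_le
  have hq2 : 2 ≤ q := hq.two_le
  have hApos : ∀ i j, A i j ≠ 0 := fun i j => (hpos i j).ne'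
  -- factorization computations
  have hfacp : ∀ X Y : ℕ, ((p ^ X * q ^ Y).factorization) p = X := by
    intro X Y
    rw [Nat.factorization_mul (pow_ne_zero X hp.pos.ne') (pow_ne_zero Y hq.pos.ne'),
        hp.factorization_pow, hq.factorization_pow]
    simp [Finsupp.single_apply, hpq.symm]
  have hfacq : ∀ X Y : ℕ, ((p ^ X * q ^ Y).factorization) q = Y := by
    intro X Y
    rw [Nat.factorization_mul (pow_ne_zero X hp.pos.ne') (pow_ne_zero Y hq.pos.ne'),
        hp.factorization_pow, hq.factorization_pow]
    simp [Finsupp.single_apply, hpq]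
  have hpq_eq : ∀ {X Y Z W : ℕ}, p ^ X * q ^ Y = p ^ Z * q ^ W → X = Z ∧ Y = W := by
    intro X Y Z W h
    constructor
    · have := congrArg (fun n : ℕ => n.factorization p) h
      simpa [hfacp] using this
    · have := congrArg (fun n : ℕ => n.factorization q) h
      simpa [hfacq] using this
  -- decomposition of entries
  have hAex : ∀ i j, ∃ X Y : ℕ, A i j = p ^ X * q ^ Y := by
    intro i j
    have hdvd : A i j ∣ p ^ s * q ^ 4 := by
      rw [← hP, ← hrowP i]
      exact Finset.dvd_prod_of_mem _ (Finset.mem_univ j)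
    have hcdvd : ordCompl[p] (A i j) ∣ p ^ s * q ^ 4 :=
      (Nat.ordCompl_dvd (A i j) p).trans hdvd
    have hnd : ¬ p ∣ ordCompl[p] (A i j) := Nat.not_dvd_ordCompl hp (hApos i j)
    have hcop : Nat.Coprime (ordCompl[p] (A i j)) (p ^ s) :=
      Nat.Coprime.pow_right s ((hp.coprime_iff_not_dvd.mpr hnd).symm)
    have hq4 : ordCompl[p] (A i j) ∣ q ^ 4 := hcop.dvd_of_dvd_mul_left hcdvd
    obtain ⟨Y, _, hYeq⟩ := (Nat.dvd_prime_pow hq).mp hq4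
    exact ⟨(A i j).factorization p, Y,
      by rw [← hYeq, Nat.ordProj_mul_ordCompl_eq_self]⟩
  choose a b hab using hAex
  -- line sums of exponents of q
  have hline_b : ∀ (t : Fin 5 → Fin 5 × Fin 5),
      (∏ k, A (t k).1 (t k).2 = P) → ∑ k, b (t k).1 (t k).2 = 4 := by
    intro t ht
    have h : p ^ (∑ k, a (t k).1 (t k).2) * q ^ (∑ k, b (t k).1 (t k).2) = p ^ s * q ^ 4 := by
      rw [← Finset.prod_pow_eq_pow_sum, ← Finset.prod_pow_eq_pow_sum,
        ← Finset.prod_mul_distrib, ← hP, ← ht]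
      exact Finset.prod_congr rfl fun k _ => (hab (t k).1 (t k).2).symm
    exact (hpq_eq h).2
  have hrow_b : ∀ i, ∑ j, b i j = 4 := fun i =>
    hline_b (fun j => (i, j)) (hrowP i)
  have hcol_b : ∀ j, ∑ i, b i j = 4 := fun j =>
    hline_b (fun i => (i, j)) (hcolP j)
  have hble4 : ∀ i j, b i j ≤ 4 := by
    intro i j
    rw [← hrow_b i]
    exact Finset.single_le_sum (fun k _ => Nat.zero_le _) (Finset.mem_univ j)
  -- L1 : no cell has q-exponent 4
  have hb_ne4 : ∀ i j, b i j ≠ 4 := by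
    intro i j h4
    have hrow0 : ∀ k, k ≠ j → b i k = 0 := by
      intro k hk
      have h1 : b i j + ∑ x ∈ Finset.univ.erase j, b i x = 4 := by
        rw [Finset.add_sum_erase _ _ (Finset.mem_univ j)]; exact hrow_b i
      have h2 : ∑ x ∈ Finset.univ.erase j, b i x = 0 := by omega
      have := (Finset.sum_eq_zero_iff).mp h2 k (Finset.mem_erase.mpr ⟨hk, Finset.mem_univ k⟩)
      exact this
    have hcol0 : ∀ k, k ≠ i → b k j = 0 := by
      intro k hk
      have h1 : b i j + ∑ x ∈ Finset.univ.erase i, b x j = 4 := by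
        rw [Finset.add_sum_erase _ (fun x => b x j) (Finset.mem_univ i)]; exact hcol_b j
      have h2 : ∑ x ∈ Finset.univ.erase i, b x j = 0 := by omega
      exact (Finset.sum_eq_zero_iff).mp h2 k (Finset.mem_erase.mpr ⟨hk, Finset.mem_univ k⟩)
    have hrowpow : ∀ k, k ≠ j → A i k = p ^ a i k := by
      intro k hk; rw [hab i k, hrow0 k hk, pow_zero, mul_one]
    have hcolpow : ∀ k, k ≠ i → A k j = p ^ a k j := by
      intro k hk; rw [hab k j, hcol0 k hk, pow_zero, mul_one]
    -- the two exponent sets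
    set E : Finset ℕ := (Finset.univ.erase j).image (fun k => a i k) with hE
    set F : Finset ℕ := (Finset.univ.erase i).image (fun k => a k j) with hF
    have hEsum : ∑ e ∈ E, p ^ e = ∑ k ∈ Finset.univ.erase j, A i k := by
      rw [hE, Finset.sum_image]
      · exact Finset.sum_congr rfl fun k hk =>
          (hrowpow k (Finset.mem_erase.mp hk).1).symm
      · intro x hx y hy hxy
        have : A i x = A i y := by
          rw [hrowpow x (Finset.mem_erase.mp hx).1, hrowpow y (Finset.mem_erase.mp hy).1, show a i x = a i y from hxy]
        have := hinj (a₁ := (i, x)) (a₂ := (i, y)) this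
        exact (Prod.mk.injEq _ _ _ _ ▸ this).2
    have hFsum : ∑ e ∈ F, p ^ e = ∑ k ∈ Finset.univ.erase i, A k j := by
      rw [hF, Finset.sum_image]
      · exact Finset.sum_congr rfl fun k hk =>
          (hcolpow k (Finset.mem_erase.mp hk).1).symm
      · intro x hx y hy hxy
        have : A x j = A y j := by
          rw [hcolpow x (Finset.mem_erase.mp hx).1, hcolpow y (Finset.mem_erase.mp hy).1, show a x j = a y j from hxy]
        have := hinj (a₁ := (x, j)) (a₂ := (y, j)) this
        exact (Prod.mk.injEq _ _ _ _ ▸ this).1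
    have hsum_eq : ∑ e ∈ E, p ^ e = ∑ e ∈ F, p ^ e := by
      have h1 : A i j + ∑ k ∈ Finset.univ.erase j, A i k = S := by
        rw [Finset.add_sum_erase _ _ (Finset.mem_univ j)]; exact hrowS i
      have h2 : A i j + ∑ k ∈ Finset.univ.erase i, A k j = S := by
        rw [Finset.add_sum_erase _ (fun x => A x j) (Finset.mem_univ i)]; exact hcolS j
      rw [hEsum, hFsum]; omega
    have hdisj : Disjoint E F := by
      rw [Finset.disjoint_left]
      intro e heE heF
      obtain ⟨x, hx, hxe⟩ := Finset.mem_image.mp heE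
      obtain ⟨y, hy, hye⟩ := Finset.mem_image.mp heF
      have : A i x = A y j := by
        rw [hrowpow x (Finset.mem_erase.mp hx).1, hcolpow y (Finset.mem_erase.mp hy).1,
          hxe, hye]
      have := hinj (a₁ := (i, x)) (a₂ := (y, j)) this
      have hxj : x = j := (Prod.mk.injEq _ _ _ _ ▸ this).2
      exact (Finset.mem_erase.mp hx).1 hxj
    have hEne : E.Nonempty := by
      obtain ⟨k, hk⟩ := exists_ne j
      exact ⟨a i k, Finset.mem_image.mpr ⟨k, Finset.mem_erase.mpr ⟨hk, Finset.mem_univ k⟩, rfl⟩⟩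
    exact disjoint_pow_sums hp2 E F hdisj hEne hsum_eq
  have hble3 : ∀ i j, b i j ≤ 3 := by
    intro i j; have h1 := hble4 i j; have h2 := hb_ne4 i j; omega
  -- minimal p-exponent
  obtain ⟨c0, -, hc0⟩ := Finset.exists_min_image Finset.univ
    (fun c : Fin 5 × Fin 5 => a c.1 c.2) ⟨(0, 0), Finset.mem_univ _⟩
  set α := a c0.1 c0.2 with hα
  have hαle : ∀ i j, α ≤ a i j := fun i j => hc0 (i, j) (Finset.mem_univ _)
  -- reduced entries
  set red : Fin 5 → Fin 5 → ℕ := fun i j => p ^ (a i j - α) * q ^ b i j with hred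
  have hredA : ∀ i j, p ^ α * red i j = A i j := by
    intro i j
    rw [hab i j, hred, ← mul_assoc, ← pow_add, Nat.add_sub_cancel' (hαle i j)]
  set S₀ := ∑ j, red 0 j with hS₀def
  have hmulS : ∀ i : Fin 5, p ^ α * ∑ j, red i j = S := by
    intro i
    rw [Finset.mul_sum, Finset.sum_congr rfl fun j _ => hredA i j]
    exact hrowS i
  have hrow_red : ∀ i, ∑ j, red i j = S₀ := by
    intro i
    exact Nat.eq_of_mul_eq_mul_left (pow_pos hp.pos α) ((hmulS i).trans (hmulS 0).symm)
  have hcol_red : ∀ j, ∑ i, red i j = S₀ := by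
    intro j
    apply Nat.eq_of_mul_eq_mul_left (pow_pos hp.pos α)
    rw [Finset.mul_sum, Finset.sum_congr rfl fun i _ => hredA i j, hcolS j]
    rw [hS₀def]
    exact (hmulS 0).symm
  -- move to ZMod p
  haveI : Fact p.Prime := ⟨hp⟩
  set Q : ZMod p := (q : ZMod p) with hQdef
  have hQne : Q ≠ 0 := by
    rw [hQdef, Ne, ZMod.natCast_eq_zero_iff]
    intro hdvd
    exact hpq ((Nat.prime_dvd_prime_iff_eq hp hq).mp hdvd)
  have hcast : ∀ i j, ((red i j : ZMod p)) = if a i j = α then Q ^ b i j else 0 := by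
    intro i j
    rw [hred]
    push_cast
    rw [ZMod.natCast_self]
    by_cases h : a i j = α
    · rw [if_pos h, h, Nat.sub_self, pow_zero, one_mul, hQdef]
    · rw [if_neg h, zero_pow, zero_mul]
      have := hαle i j
      omega
  have hrowZ : ∀ i : Fin 5, ∑ j, (if a i j = α then Q ^ b i j else 0) = (S₀ : ZMod p) := by
    intro i
    rw [← hrow_red i]
    push_cast
    exact (Finset.sum_congr rfl fun j _ => (hcast i j)).symm
  have hcolZ : ∀ j : Fin 5, ∑ i, (if a i j = α then Q ^ b i j else 0) = (S₀ : ZMod p) := by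
    intro j
    rw [← hcol_red j]
    push_cast
    exact (Finset.sum_congr rfl fun i _ => (hcast i j)).symm
  -- the set T of minimal cells
  set T : Finset (Fin 5 × Fin 5) :=
    Finset.univ.filter (fun c : Fin 5 × Fin 5 => a c.1 c.2 = α) with hT
  have hmemT : ∀ c : Fin 5 × Fin 5, c ∈ T ↔ a c.1 c.2 = α := by
    intro c; rw [hT, Finset.mem_filter]; simp
  have hTbinj : ∀ c ∈ T, ∀ c' ∈ T, b c.1 c.2 = b c'.1 c'.2 → c = c' := by
    intro c hc c' hc' hbc
    apply hinj (a₁ := c) (a₂ := c')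
    show A c.1 c.2 = A c'.1 c'.2
    rw [hab, hab, (hmemT c).mp hc, (hmemT c').mp hc', hbc]
  have hTcard : T.card ≤ 4 := by
    have himg : T.image (fun c : Fin 5 × Fin 5 => b c.1 c.2) ⊆ Finset.range 4 := by
      intro e he
      obtain ⟨c, hc, hce⟩ := Finset.mem_image.mp he
      rw [Finset.mem_range, ← hce]
      have := hble3 c.1 c.2; omega
    have hcardim : (T.image (fun c : Fin 5 × Fin 5 => b c.1 c.2)).card = T.card :=
      Finset.card_image_of_injOn hTbinj
    have := Finset.card_le_card himg
    simp only [Finset.card_range] at this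
    omega
  have hS₀Z : (S₀ : ZMod p) = 0 := by
    -- there is a row avoiding T
    have hfree : ∃ i : Fin 5, ∀ j, a i j ≠ α := by
      by_contra hcon
      push_neg at hcon
      choose f hf using hcon
      have hsub : Finset.univ.image (fun i : Fin 5 => (i, f i)) ⊆ T := by
        intro c hc
        obtain ⟨i, -, hic⟩ := Finset.mem_image.mp hc
        rw [hmemT, ← hic]
        exact hf i
      have hcard5 : (Finset.univ.image (fun i : Fin 5 => (i, f i))).card = 5 := by
        rw [Finset.card_image_of_injective _ (fun x y hxy => (Prod.mk.injEq _ _ _ _ ▸ hxy).1)]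
        simp
      have := Finset.card_le_card hsub
      omega
    obtain ⟨i, hi⟩ := hfree
    rw [← hrowZ i]
    exact Finset.sum_eq_zero fun j _ => if_neg (hi j)
  -- each occupied row/column contains at least two cells of T
  have claim_row : ∀ i j, a i j = α → ∃ j', j' ≠ j ∧ a i j' = α := by
    intro i j hij
    by_contra hcon
    push_neg at hcon
    have h1 : ∑ j', (if a i j' = α then Q ^ b i j' else 0) = Q ^ b i j := by
      rw [Finset.sum_eq_single j]
      · exact if_pos hij
      · intro j' _ hj'
        exact if_neg (hcon j' hj')
      · intro h; exact absurd (Finset.mem_univ j) h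
    have := (h1.symm.trans (hrowZ i)).trans hS₀Z
    exact pow_ne_zero _ hQne this
  have claim_col : ∀ i j, a i j = α → ∃ i', i' ≠ i ∧ a i' j = α := by
    intro i j hij
    by_contra hcon
    push_neg at hcon
    have h1 : ∑ i', (if a i' j = α then Q ^ b i' j else 0) = Q ^ b i j := by
      rw [Finset.sum_eq_single i]
      · exact if_pos hij
      · intro i' _ hi'
        exact if_neg (hcon i' hi')
      · intro h; exact absurd (Finset.mem_univ i) h
    have := (h1.symm.trans (hcolZ j)).trans hS₀Z
    exact pow_ne_zero _ hQne this
  -- extract the rectangle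
  set r : Fin 5 := c0.1 with hrdef
  set x : Fin 5 := c0.2 with hxdef
  have hrx : a r x = α := rfl
  obtain ⟨y, hyx, hry⟩ := claim_row r x hrx
  obtain ⟨r2, hr2r, hr2x⟩ := claim_col r x hrx
  obtain ⟨r3, hr3r, hr3y⟩ := claim_col r y hry
  have hr23 : r2 = r3 := by
    by_contra hne
    obtain ⟨y2, hy2, h2y2⟩ := claim_row r2 x hr2x
    obtain ⟨y3, hy3, h3y3⟩ := claim_row r3 y hr3y
    -- six distinct cells of T
    set s6 : Finset (Fin 5 × Fin 5) :=
      {(r, x), (r, y), (r2, x), (r2, y2), (r3, y), (r3, y3)} with hs6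
    have hsub : s6 ⊆ T := by
      intro c hc
      rw [hmemT]
      rw [hs6] at hc
      simp only [Finset.mem_insert, Finset.mem_singleton] at hc
      rcases hc with h | h | h | h | h | h <;> subst h
      · exact hrx
      · exact hry
      · exact hr2x
      · exact h2y2
      · exact hr3y
      · exact h3y3
    have n1 : x ≠ y := Ne.symm hyx
    have n2 : r ≠ r2 := Ne.symm hr2r
    have n3 : r ≠ r3 := Ne.symm hr3r
    have n4 : x ≠ y2 := Ne.symm hy2
    have n5 : y ≠ y3 := Ne.symm hy3
    have hcard6 : s6.card = 6 := by
      rw [hs6]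
      rw [Finset.card_insert_of_notMem (by
        simp only [Finset.mem_insert, Finset.mem_singleton, Prod.mk.injEq, not_or]
        tauto)]
      rw [Finset.card_insert_of_notMem (by
        simp only [Finset.mem_insert, Finset.mem_singleton, Prod.mk.injEq, not_or]
        tauto)]
      rw [Finset.card_insert_of_notMem (by
        simp only [Finset.mem_insert, Finset.mem_singleton, Prod.mk.injEq, not_or]
        tauto)]
      rw [Finset.card_insert_of_notMem (by
        simp only [Finset.mem_insert, Finset.mem_singleton, Prod.mk.injEq, not_or]
        tauto)]
      rw [Finset.card_insert_of_notMem (by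
        simp only [Finset.mem_singleton, Prod.mk.injEq, not_or]
        tauto)]
      simp
    have := Finset.card_le_card hsub
    omega
  subst hr23
  -- T is exactly the rectangle {r,r2} × {x,y}
  set quad : Finset (Fin 5 × Fin 5) := {(r, x), (r, y), (r2, x), (r2, y)} with hquad
  have hsubq : quad ⊆ T := by
    intro c hc
    rw [hmemT]
    rw [hquad] at hc
    simp only [Finset.mem_insert, Finset.mem_singleton] at hc
    rcases hc with h | h | h | h <;> subst h
    · exact hrx
    · exact hry
    · exact hr2x
    · exact hr3y
  have m1 : x ≠ y := Ne.symm hyx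
  have m2 : r ≠ r2 := Ne.symm hr3r
  have hcard4 : quad.card = 4 := by
    rw [hquad]
    rw [Finset.card_insert_of_notMem (by
      simp only [Finset.mem_insert, Finset.mem_singleton, Prod.mk.injEq, not_or]
      tauto)]
    rw [Finset.card_insert_of_notMem (by
      simp only [Finset.mem_insert, Finset.mem_singleton, Prod.mk.injEq, not_or]
      tauto)]
    rw [Finset.card_insert_of_notMem (by
      simp only [Finset.mem_singleton, Prod.mk.injEq, not_or]
      tauto)]
    simp
  have hTeq : T = quad :=
    (Finset.eq_of_subset_of_card_le hsubq (by omega)).symm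
  have hchar : ∀ i j, a i j = α ↔
      ((i, j) = (r, x) ∨ (i, j) = (r, y) ∨ (i, j) = (r2, x) ∨ (i, j) = (r2, y)) := by
    intro i j
    rw [← hmemT (i, j), hTeq, hquad]
    simp only [Finset.mem_insert, Finset.mem_singleton]
  have hcharr : ∀ j, (a r j = α) ↔ (j = x ∨ j = y) := by
    intro j; rw [hchar r j]; simp [Prod.ext_iff, m2]
  have hcharr3 : ∀ j, (a r2 j = α) ↔ (j = x ∨ j = y) := by
    intro j; rw [hchar r2 j]; simp [Prod.ext_iff, hr3r]
  have hcharx : ∀ i, (a i x = α) ↔ (i = r ∨ i = r2) := by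
    intro i; rw [hchar i x]
    simp only [Prod.mk.injEq]
    constructor
    · rintro (⟨h1, h2⟩ | ⟨h1, h2⟩ | ⟨h1, h2⟩ | ⟨h1, h2⟩)
      · exact Or.inl h1
      · exact absurd h2 m1
      · exact Or.inr h1
      · exact absurd h2 m1
    · rintro (h | h)
      · exact Or.inl ⟨h, trivial⟩
      · exact Or.inr (Or.inr (Or.inl ⟨h, trivial⟩))
  have hchary : ∀ i, (a i y = α) ↔ (i = r ∨ i = r2) := by
    intro i; rw [hchar i y]
    simp only [Prod.mk.injEq]
    constructor
    · rintro (⟨h1, h2⟩ | ⟨h1, h2⟩ | ⟨h1, h2⟩ | ⟨h1, h2⟩)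
      · exact absurd h2.symm m1
      · exact Or.inl h1
      · exact absurd h2.symm m1
      · exact Or.inr h1
    · rintro (h | h)
      · exact Or.inr (Or.inl ⟨h, trivial⟩)
      · exact Or.inr (Or.inr (Or.inr ⟨h, trivial⟩))
  -- pair sum evaluation lemma
  have epair : ∀ (u v : Fin 5) (g : Fin 5 → ZMod p), u ≠ v →
      (∑ j, (if j = u ∨ j = v then g j else 0)) = g u + g v := by
    intro u v g huv
    have hss := Finset.sum_subset
      (f := fun j => if j = u ∨ j = v then g j else 0)
      (Finset.subset_univ ({u, v} : Finset (Fin 5)))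
      (fun j _ hj => if_neg (by
        simp only [Finset.mem_insert, Finset.mem_singleton] at hj
        tauto))
    rw [← hss, Finset.sum_pair huv, if_pos (Or.inl rfl), if_pos (Or.inr rfl)]
  -- the four equations in ZMod p
  have e1 : Q ^ b r x + Q ^ b r y = 0 := by
    have h := (hrowZ r).trans hS₀Z
    rw [Finset.sum_congr rfl (fun j _ => if_congr (hcharr j) rfl rfl)] at h
    rw [epair x y _ m1] at h
    exact h
  have e2 : Q ^ b r2 x + Q ^ b r2 y = 0 := by
    have h := (hrowZ r2).trans hS₀Z
    rw [Finset.sum_congr rfl (fun j _ => if_congr (hcharr3 j) rfl rfl)] at h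
    rw [epair x y _ m1] at h
    exact h
  have e3 : Q ^ b r x + Q ^ b r2 x = 0 := by
    have h := (hcolZ x).trans hS₀Z
    rw [Finset.sum_congr rfl (fun i _ => if_congr (hcharx i) rfl rfl)] at h
    rw [epair r r2 _ m2] at h
    exact h
  have e4 : Q ^ b r y + Q ^ b r2 y = 0 := by
    have h := (hcolZ y).trans hS₀Z
    rw [Finset.sum_congr rfl (fun i _ => if_congr (hchary i) rfl rfl)] at h
    rw [epair r r2 _ m2] at h
    exact h
  -- sum bounds
  have hbsum : ∀ (u v : Fin 5) (g : Fin 5 → ℕ), u ≠ v → (∑ j, g j = 4) →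
      g u + g v ≤ 4 := by
    intro u v g huv hsum
    have h := Finset.sum_le_sum_of_subset (f := g)
      (Finset.subset_univ ({u, v} : Finset (Fin 5)))
    rw [Finset.sum_pair huv, hsum] at h
    exact h
  have s1 : b r x + b r y ≤ 4 := hbsum x y (b r) m1 (hrow_b r)
  have s2 : b r2 x + b r2 y ≤ 4 := hbsum x y (b r2) m1 (hrow_b r2)
  have s3 : b r x + b r2 x ≤ 4 := hbsum r r2 (fun i => b i x) m2 (hcol_b x)
  have s4 : b r y + b r2 y ≤ 4 := hbsum r r2 (fun i => b i y) m2 (hcol_b y)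
  -- distinctness of the four exponents
  have hbne : ∀ (i j i' j' : Fin 5), a i j = α → a i' j' = α → (i, j) ≠ (i', j') →
      b i j ≠ b i' j' := by
    intro i j i' j' h1 h2 hne heq
    exact hne (hTbinj (i, j) ((hmemT _).mpr h1) (i', j') ((hmemT _).mpr h2) heq)
  have d1 : b r x ≠ b r y := hbne r x r y hrx hry (by simp [Prod.ext_iff, m1])
  have d2 : b r x ≠ b r2 x := hbne r x r2 x hrx hr2x (by simp [Prod.ext_iff, m2])
  have d3 : b r x ≠ b r2 y := hbne r x r2 y hrx hr3y (by simp [Prod.ext_iff, m2])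
  have d4 : b r y ≠ b r2 x := hbne r y r2 x hry hr2x (by simp [Prod.ext_iff, m2])
  have d5 : b r y ≠ b r2 y := hbne r y r2 y hry hr3y (by simp [Prod.ext_iff, m2])
  have d6 : b r2 x ≠ b r2 y := hbne r2 x r2 y hr2x hr3y (by simp [Prod.ext_iff, m1])
  have l1 := hble3 r x
  have l2 := hble3 r y
  have l3 := hble3 r2 x
  have l4 := hble3 r2 y
  -- the diagonal contains {2,3}
  have hcases : (b r x = 2 ∧ b r2 y = 3) ∨ (b r x = 3 ∧ b r2 y = 2) ∨
      (b r y = 2 ∧ b r2 x = 3) ∨ (b r y = 3 ∧ b r2 x = 2) := by omega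
  -- endgame
  have key : Q ^ 2 = Q ^ 3 → p = 2 ∨ p = 3 := by
    intro h23
    have hQ1 : Q = 1 := by
      have h2 : Q ^ 2 ≠ 0 := pow_ne_zero _ hQne
      have h : Q ^ 2 * 1 = Q ^ 2 * Q := by rw [mul_one, ← pow_succ]; exact h23
      exact (mul_left_cancel₀ h2 h).symm
    have h20 : ((2 : ℕ) : ZMod p) = 0 := by
      have h := e1
      rw [hQ1, one_pow, one_pow] at h
      push_cast
      linear_combination h
    have hdvd2 : p ∣ 2 := (ZMod.natCast_eq_zero_iff 2 p).mp h20
    exact Or.inl ((Nat.prime_dvd_prime_iff_eq hp Nat.prime_two).mp hdvd2)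
  have hd1 : Q ^ b r x = Q ^ b r2 y := by linear_combination e3 - e2
  have hd2 : Q ^ b r y = Q ^ b r2 x := by linear_combination e1 - e3
  rcases hcases with ⟨hA1, hA2⟩ | ⟨hA1, hA2⟩ | ⟨hA1, hA2⟩ | ⟨hA1, hA2⟩
  · apply key; rw [← hA1, ← hA2]; exact hd1
  · apply key; rw [← hA2, ← hA1]; exact hd1.symm
  · apply key; rw [← hA1, ← hA2]; exact hd2
  · apply key; rw [← hA2, ← hA1]; exact hd2.symm
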